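/- Let (D, M) be a local integral domain. Then D is a t-local domain in each of the following situations: (1) M is minimal over an integral t-ideal of D; (2) M is an associated prime over a principal ideal, i.e., there exist a ∈ D, a ≠ 0, and b ∈ D \ aD such that M is minimal over the ideal (aD :_D bD) = {r ∈ D : rb ∈ aD}; (3) M is minimal over a nonzero principal ideal of D; (4) M is principal; (5) D is 1-dimensional (Krull dimension of D equals 1). -/

import Mathlib

open scoped nonZeroDivisors

/-- The `t`-closure of a fractional ideal `E` of an integral domain `D`:
the union (here: supremum, which is a directed union) of `F^v = (F⁻¹)⁻¹` over all
nonzero finitely generated fractional subideals `F` of `E`, viewed as a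
`D`-submodule of the fraction field of `D`. -/
noncomputable def tClos (D : Type*) [CommRing D] [IsDomain D]
    (E : FractionalIdeal D⁰ (FractionRing D)) : Submodule D (FractionRing D) :=
  ⨆ F ∈ {F : FractionalIdeal D⁰ (FractionRing D) |
      F ≠ 0 ∧ F ≤ E ∧ (F : Submodule D (FractionRing D)).FG},
    (((F⁻¹)⁻¹ : FractionalIdeal D⁰ (FractionRing D)) : Submodule D (FractionRing D))

/-- An integral ideal `I` of an integral domain `D` is a `t`-ideal if `I = I^t`. -/
def Ideal.IsT {D : Type*} [CommRing D] [IsDomain D] (I : Ideal D) : Prop :=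
  ((I : FractionalIdeal D⁰ (FractionRing D)) : Submodule D (FractionRing D)) = tClos D I

namespace TLocalAux

open FractionalIdeal

variable {D : Type*} [CommRing D] [IsDomain D]

local notation "K" => FractionRing D
local notation "FI" => FractionalIdeal D⁰ (FractionRing D)

lemma one_mem_inv {F : FI} (hF1 : F ≤ 1) (hF0 : F ≠ 0) : (1 : K) ∈ F⁻¹ := by
  rw [mem_inv_iff hF0]
  intro y hy
  rw [one_mul]
  exact hF1 hy

lemma one_ne_zero' : (1 : FI) ≠ 0 := by
  intro h
  have h1 : (1 : K) ∈ (1 : FI) := one_mem_one _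
  rw [h] at h1
  exact one_ne_zero ((mem_zero_iff _).mp h1)

lemma inv_ne_zero_of_le_one {F : FI} (hF1 : F ≤ 1) (hF0 : F ≠ 0) : F⁻¹ ≠ 0 := by
  intro h
  have h1 := one_mem_inv hF1 hF0
  rw [h] at h1
  exact one_ne_zero ((mem_zero_iff _).mp h1)

lemma le_vv {F : FI} (hF0 : F ≠ 0) (hFi : F⁻¹ ≠ 0) : F ≤ (F⁻¹)⁻¹ := by
  rw [SetLike.le_def]
  intro x hx
  rw [mem_inv_iff hFi]
  intro y hy
  rw [mul_comm]
  exact (mem_inv_iff hF0).mp hy x hx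

lemma vv_le_one {F : FI} (hF1 : F ≤ 1) (hF0 : F ≠ 0) : (F⁻¹)⁻¹ ≤ 1 := by
  have h1 : (1 : FI) ≤ F⁻¹ := one_le.mpr (one_mem_inv hF1 hF0)
  have := inv_anti_mono (I := (1 : FI)) one_ne_zero'
    (inv_ne_zero_of_le_one hF1 hF0) h1
  rwa [inv_one] at this

lemma vv_mono {F G : FI} (hF0 : F ≠ 0) (hGi : G⁻¹ ≠ 0) (h : F ≤ G) :
    (F⁻¹)⁻¹ ≤ (G⁻¹)⁻¹ := by
  have hG0 : G ≠ 0 := fun h0 => hF0 (le_antisymm (h0 ▸ h) (zero_le _))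
  have step : G⁻¹ ≤ F⁻¹ := inv_anti_mono hF0 hG0 h
  have hFi : F⁻¹ ≠ 0 := fun h0 => hGi (le_antisymm (h0 ▸ step) (zero_le _))
  exact inv_anti_mono hGi hFi step

lemma le_tClos (E : FI) : (E : Submodule D K) ≤ tClos D E := by
  intro x hx
  by_cases hx0 : x = (0 : K)
  · rw [hx0]; exact Submodule.zero_mem _
  · have hxE : x ∈ E := hx
    have hmem : spanSingleton D⁰ x ∈ {F : FI | F ≠ 0 ∧ F ≤ E ∧
        (F : Submodule D K).FG} := by
      refine ⟨spanSingleton_ne_zero_iff.mpr hx0, spanSingleton_le_iff_mem.mpr hxE, ?_⟩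
      rw [coe_spanSingleton]
      exact Submodule.fg_span_singleton x
    have hxv : x ∈ (((spanSingleton D⁰ x)⁻¹)⁻¹ : FI) := by
      refine le_vv (spanSingleton_ne_zero_iff.mpr hx0) ?_ (mem_spanSingleton_self _ _)
      rw [spanSingleton_inv]
      exact spanSingleton_ne_zero_iff.mpr (inv_ne_zero hx0)
    exact le_iSup₂ (f := fun (F : FI) (_ : F ∈ _) =>
      (((F⁻¹)⁻¹ : FI) : Submodule D K)) _ hmem hxv

lemma tClos_le {E : FI} (hE : ∀ F : FI, F ≠ 0 → F ≤ E → (F⁻¹)⁻¹ ≤ E) :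
    tClos D E ≤ (E : Submodule D K) := by
  refine iSup₂_le ?_
  rintro F ⟨hF0, hFE, -⟩
  exact coe_le_coe.mpr (hE F hF0 hFE)

lemma isT_of_vv_eq {I : Ideal D} (h : (((I : FI))⁻¹)⁻¹ = (I : FI)) : I.IsT := by
  refine le_antisymm (le_tClos _) (tClos_le ?_)
  intro F hF0 hFE
  by_cases hI : (I : FI) = 0
  · rw [hI] at hFE
    exact absurd (le_antisymm hFE (zero_le _)) hF0
  · have hIi : (I : FI)⁻¹ ≠ 0 := inv_ne_zero_of_le_one coeIdeal_le_one hI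
    exact (vv_mono hF0 hIi hFE).trans h.le

lemma bot_isT : (⊥ : Ideal D).IsT := by
  refine le_antisymm (le_tClos _) (tClos_le ?_)
  intro F hF0 hFE
  rw [coeIdeal_bot] at hFE
  exact absurd (le_antisymm hFE (zero_le _)) hF0

lemma pow_le_one {F : FI} (hF1 : F ≤ 1) : ∀ n, F ^ n ≤ (1 : FI)
  | 0 => by rw [pow_zero]
  | n + 1 => by
    rw [pow_succ]
    refine mul_le.mpr ?_
    intro i hi j hj
    obtain ⟨r, hr⟩ := (mem_one_iff _).mp (pow_le_one hF1 n hi)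
    obtain ⟨s, hs⟩ := (mem_one_iff _).mp (hF1 hj)
    exact (mem_one_iff _).mpr ⟨r * s, by rw [_root_.map_mul, hr, hs]⟩

lemma pow_inv_one {F : FI} (hpow : ∀ m, F ^ m ≠ 0) (hF1 : F ≤ 1)
    (hinv : F⁻¹ = 1) : ∀ n, (F ^ n)⁻¹ = 1
  | 0 => by rw [pow_zero, inv_one]
  | n + 1 => by
    have hF0 : F ≠ 0 := by simpa using hpow 1
    apply le_antisymm
    · rw [SetLike.le_def]
      intro x hx
      have hx' : x ∈ (F ^ n)⁻¹ := by
        rw [mem_inv_iff (hpow n)]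
        intro y hy
        rw [← hinv, mem_inv_iff hF0]
        intro z hz
        have hyz : y * z ∈ F ^ (n + 1) := by
          rw [pow_succ]
          exact mul_mem_mul hy hz
        have := (mem_inv_iff (hpow (n + 1))).mp hx _ hyz
        rwa [← mul_assoc] at this
      rwa [pow_inv_one hpow hF1 hinv n] at hx'
    · exact one_le.mpr (one_mem_inv (pow_le_one hF1 (n + 1)) (hpow (n + 1)))

lemma isT_maximalIdeal_of_minimal [IsLocalRing D] {I : Ideal D} (hbot : I ≠ ⊥)
    (hT : I.IsT) (hmin : IsLocalRing.maximalIdeal D ∈ I.minimalPrimes) :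
    (IsLocalRing.maximalIdeal D).IsT := by
  set M := IsLocalRing.maximalIdeal D with hM
  have hMp : M.IsPrime := hmin.1.1
  have hIM : I ≤ M := hmin.1.2
  have hrad : I.radical = M := by
    apply le_antisymm
    · rw [Ideal.radical_eq_sInf]
      exact sInf_le ⟨hIM, hMp⟩
    · rw [Ideal.radical_eq_sInf]
      refine le_sInf ?_
      rintro Q ⟨hIQ, hQp⟩
      exact hmin.2 ⟨hQp, hIQ⟩ (IsLocalRing.le_maximalIdeal hQp.ne_top)
  refine le_antisymm (le_tClos _) ?_
  refine iSup₂_le ?_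
  rintro F ⟨hF0, hFM, hFfg⟩
  by_cases hok : (F⁻¹)⁻¹ ≤ (M : FI)
  · exact coe_le_coe.mpr hok
  exfalso
  have hF1 : F ≤ (1 : FI) := hFM.trans coeIdeal_le_one
  obtain ⟨J, rfl⟩ := le_one_iff_exists_coeIdeal.mp hF1
  have hvle : ((J : FI)⁻¹)⁻¹ ≤ 1 := vv_le_one hF1 hF0
  obtain ⟨Jv, hJv⟩ := le_one_iff_exists_coeIdeal.mp hvle
  have hJvtop : Jv = ⊤ := by
    by_contra hne
    refine hok ?_
    rw [← hJv]
    exact (coeIdeal_le_coeIdeal _).mpr (IsLocalRing.le_maximalIdeal hne)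
  have hvv_one : ((J : FI)⁻¹)⁻¹ = 1 := by rw [← hJv, hJvtop, coeIdeal_top]
  have hIi : (J : FI)⁻¹ ≠ 0 := inv_ne_zero_of_le_one hF1 hF0
  have hinv1 : (J : FI)⁻¹ = 1 := by
    apply le_antisymm
    · have h2 : ((J : FI)⁻¹)⁻¹ ≠ 0 := by rw [hvv_one]; exact one_ne_zero'
      have := le_vv hIi h2
      rwa [hvv_one, inv_one] at this
    · exact one_le.mpr (one_mem_inv hF1 hF0)
  have hJ0 : J ≠ ⊥ := fun h => hF0 (by rw [h, coeIdeal_bot])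
  obtain ⟨x, hxJ, hx0⟩ := Submodule.ne_bot_iff J |>.mp hJ0
  have hJfg : J.FG := by
    apply Submodule.fg_of_fg_map_injective (Algebra.linearMap D K)
      (IsFractionRing.injective D K)
    exact hFfg
  have hJM : J ≤ M := (coeIdeal_le_coeIdeal _).mp hFM
  obtain ⟨n, hn⟩ := Ideal.exists_pow_le_of_le_radical_of_fg (by rw [hrad]; exact hJM) hJfg
  have hpow : ∀ m, (J : FI) ^ m ≠ 0 := by
    intro m h
    have h2 : (↑(J ^ m) : FI) = 0 := by rw [coeIdeal_pow]; exact h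
    rw [coeIdeal_eq_zero] at h2
    have h3 : x ^ m ∈ (⊥ : Ideal D) := h2 ▸ Ideal.pow_mem_pow hxJ m
    exact pow_ne_zero m hx0 (by simpa using h3)
  have hpinv : (((J : FI)) ^ n)⁻¹ = 1 := pow_inv_one hpow hF1 hinv1 n
  have hmem : (↑(J ^ n) : FI) ∈ {F : FI | F ≠ 0 ∧ F ≤ ↑I ∧
      (F : Submodule D K).FG} := by
    refine ⟨by rw [coeIdeal_pow]; exact hpow n, (coeIdeal_le_coeIdeal _).mpr hn, ?_⟩
    rw [coeIdeal_pow, coe_pow]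
    exact Submodule.FG.pow hFfg n
  have h1 : (1 : K) ∈ tClos D (I : FI) := by
    refine le_iSup₂ (f := fun (F : FI) (_ : F ∈ _) =>
      (((F⁻¹)⁻¹ : FI) : Submodule D K)) _ hmem ?_
    show (1 : K) ∈ (((↑(J ^ n) : FI))⁻¹)⁻¹
    rw [coeIdeal_pow, hpinv, inv_one]
    exact one_mem_one _
  rw [← hT] at h1
  obtain ⟨r, hrI, hr⟩ := (mem_coeIdeal _).mp h1
  have hr1 : r = 1 := IsFractionRing.injective D K (by rw [hr, _root_.map_one])
  exact hMp.ne_top (Ideal.eq_top_iff_one M |>.mpr (hIM (hr1 ▸ hrI)))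

lemma colon_isT {a b : D} (ha : a ≠ 0) (hb : b ∉ Ideal.span {a}) :
    ((Ideal.span {a}).colon (Ideal.span {b})).IsT := by
  set I := (Ideal.span {a}).colon (Ideal.span {b}) with hI
  have hb0 : b ≠ 0 := fun h => hb (h ▸ Submodule.zero_mem _)
  have haI : a ∈ I := Ideal.mem_colon_span_singleton.mpr (Ideal.mem_span_singleton.mpr ⟨b, rfl⟩)
  have hInebot : I ≠ ⊥ := fun h => ha (by simpa [h] using haI)
  have hI0 : (I : FI) ≠ 0 := coeIdeal_ne_zero.mpr hInebot
  have ha0' : algebraMap D K a ≠ 0 :=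
    fun h => ha (IsFractionRing.injective D K (by rw [h, _root_.map_zero]))
  have hb0' : algebraMap D K b ≠ 0 :=
    fun h => hb0 (IsFractionRing.injective D K (by rw [h, _root_.map_zero]))
  have hx₀ : algebraMap D K a / algebraMap D K b ≠ 0 := div_ne_zero ha0' hb0'
  -- (i)
  have hle : (I : FI) ≤ spanSingleton D⁰ (algebraMap D K a / algebraMap D K b) := by
    rw [SetLike.le_def]
    intro x hx
    obtain ⟨r, hrI, rfl⟩ := (mem_coeIdeal _).mp hx
    obtain ⟨d, hd⟩ := Ideal.mem_span_singleton.mp (Ideal.mem_colon_span_singleton.mp hrI)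
    refine (mem_spanSingleton _).mpr ⟨d, ?_⟩
    rw [Algebra.smul_def, ← mul_div_assoc, div_eq_iff hb0', ← _root_.map_mul,
      ← _root_.map_mul, hd, mul_comm d a]
  -- (ii)
  have hmem : ∀ x : K, x ∈ spanSingleton D⁰ (algebraMap D K a / algebraMap D K b) →
      x ∈ (1 : FI) → x ∈ (I : FI) := by
    intro x hx1 hx2
    obtain ⟨d, hd⟩ := (mem_spanSingleton _).mp hx1
    obtain ⟨r, hr⟩ := (mem_one_iff _).mp hx2
    refine (mem_coeIdeal _).mpr ⟨r, ?_, hr⟩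
    refine Ideal.mem_colon_span_singleton.mpr (Ideal.mem_span_singleton.mpr ⟨d, ?_⟩)
    apply IsFractionRing.injective D K
    rw [_root_.map_mul, _root_.map_mul, hr, ← hd, Algebra.smul_def]
    field_simp
  -- divisoriality
  have hvv : (((I : FI))⁻¹)⁻¹ = (I : FI) := by
    apply le_antisymm
    · have hsne : (spanSingleton D⁰ (algebraMap D K a / algebraMap D K b))⁻¹ ≠ 0 := by
        rw [spanSingleton_inv]
        exact spanSingleton_ne_zero_iff.mpr (inv_ne_zero hx₀)
      have h1 : (((I : FI))⁻¹)⁻¹ ≤ spanSingleton D⁰ (algebraMap D K a / algebraMap D K b) := by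
        have := vv_mono hI0 hsne hle
        rwa [spanSingleton_inv, spanSingleton_inv, inv_inv] at this
      have h2 : (((I : FI))⁻¹)⁻¹ ≤ 1 := vv_le_one coeIdeal_le_one hI0
      rw [SetLike.le_def]
      intro x hx
      exact hmem x (h1 hx) (h2 hx)
    · exact le_vv hI0 (inv_ne_zero_of_le_one coeIdeal_le_one hI0)
  exact isT_of_vv_eq hvv

lemma case2 [IsLocalRing D] {a b : D} (ha : a ≠ 0) (hb : b ∉ Ideal.span {a})
    (hmin : IsLocalRing.maximalIdeal D ∈
      ((Ideal.span {a}).colon (Ideal.span {b})).minimalPrimes) :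
    (IsLocalRing.maximalIdeal D).IsT := by
  have hne : (Ideal.span {a}).colon (Ideal.span {b}) ≠ ⊥ := by
    intro h
    have haI : a ∈ (Ideal.span {a}).colon (Ideal.span {b}) :=
      Ideal.mem_colon_span_singleton.mpr (Ideal.mem_span_singleton.mpr ⟨b, rfl⟩)
    exact ha (by simpa [h] using haI)
  exact isT_maximalIdeal_of_minimal hne (colon_isT ha hb) hmin

lemma case3 [IsLocalRing D] {a : D} (ha : a ≠ 0)
    (hmin : IsLocalRing.maximalIdeal D ∈ (Ideal.span {a}).minimalPrimes) :
    (IsLocalRing.maximalIdeal D).IsT := by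
  have hcol : (Ideal.span {a}).colon (Ideal.span {(1 : D)}) = Ideal.span {a} := by
    ext r
    rw [Ideal.mem_colon_span_singleton, mul_one]
  have h1 : (1 : D) ∉ Ideal.span {a} := by
    intro h
    exact hmin.1.1.ne_top ((Ideal.eq_top_iff_one _).mpr (hmin.1.2 h))
  exact case2 ha h1 (by rw [hcol]; exact hmin)

end TLocalAux

/-- Let `(D, M)` be a local integral domain. Then `D` is `t`-local (i.e. `M` is a
`t`-ideal) in each of the following situations:
(1) `M` is minimal over an integral `t`-ideal of `D`;
(2) `M` is an associated prime over a principal ideal, i.e. `M` is minimal over an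
ideal `(aD :_D bD)` with `a ≠ 0` and `b ∉ aD`;
(3) `M` is minimal over a nonzero principal ideal;
(4) `M` is principal;
(5) `D` is `1`-dimensional. -/
theorem t_local_sufficient_conditions {D : Type*} [CommRing D] [IsDomain D] [IsLocalRing D] :
    ((∃ I : Ideal D, I ≠ ⊥ ∧ I.IsT ∧ IsLocalRing.maximalIdeal D ∈ I.minimalPrimes) →
        (IsLocalRing.maximalIdeal D).IsT) ∧
    ((∃ a b : D, a ≠ 0 ∧ b ∉ Ideal.span {a} ∧
        IsLocalRing.maximalIdeal D ∈ ((Ideal.span {a}).colon (Ideal.span {b})).minimalPrimes) →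
        (IsLocalRing.maximalIdeal D).IsT) ∧
    ((∃ a : D, a ≠ 0 ∧ IsLocalRing.maximalIdeal D ∈ (Ideal.span {a}).minimalPrimes) →
        (IsLocalRing.maximalIdeal D).IsT) ∧
    ((IsLocalRing.maximalIdeal D).IsPrincipal → (IsLocalRing.maximalIdeal D).IsT) ∧
    (ringKrullDim D = 1 → (IsLocalRing.maximalIdeal D).IsT) := by
  refine ⟨?_, ?_, ?_, ?_, ?_⟩
  · rintro ⟨I, hbot, hT, hmin⟩
    exact TLocalAux.isT_maximalIdeal_of_minimal hbot hT hmin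
  · rintro ⟨a, b, ha, hb, hmin⟩
    exact TLocalAux.case2 ha hb hmin
  · rintro ⟨a, ha, hmin⟩
    exact TLocalAux.case3 ha hmin
  · rintro ⟨a, haM⟩
    rw [Ideal.submodule_span_eq] at haM
    by_cases h0 : a = 0
    · subst h0
      have hb : IsLocalRing.maximalIdeal D = ⊥ := by
        rw [haM, Ideal.span_singleton_eq_bot]
      exact hb ▸ TLocalAux.bot_isT
    · refine TLocalAux.case3 h0 ⟨⟨inferInstance, haM.ge⟩, ?_⟩
      rintro Q ⟨hQp, hQx⟩ _
      rw [haM]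
      exact hQx
  · intro hdim
    have hMbot : IsLocalRing.maximalIdeal D ≠ ⊥ := by
      intro h
      have hf : IsField D := IsLocalRing.isField_iff_maximalIdeal_eq.mpr h
      rw [ringKrullDim_eq_zero_of_isField hf] at hdim
      exact absurd hdim (by norm_num)
    obtain ⟨x, hxM, hx0⟩ := (Submodule.ne_bot_iff _).mp hMbot
    refine TLocalAux.case3 hx0 ⟨⟨inferInstance, (Ideal.span_singleton_le_iff_mem _).mpr hxM⟩, ?_⟩
    rintro Q ⟨hQp, hQx⟩ hle
    by_contra hnle
    have hQlt : Q < IsLocalRing.maximalIdeal D := lt_of_le_of_ne hle fun h => hnle h.ge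
    have hQ0 : Q ≠ ⊥ := by
      intro h
      rw [h] at hQx
      exact hx0 (by simpa using hQx (Ideal.mem_span_singleton_self x))
    let p0 : PrimeSpectrum D := ⟨⊥, Ideal.bot_prime⟩
    let p1 : PrimeSpectrum D := ⟨Q, hQp⟩
    let p2 : PrimeSpectrum D := ⟨IsLocalRing.maximalIdeal D, inferInstance⟩
    have h01 : p0 < p1 := by
      rw [← PrimeSpectrum.asIdeal_lt_asIdeal]
      exact bot_lt_iff_ne_bot.mpr hQ0
    have h12 : p1 < p2 := by
      rw [← PrimeSpectrum.asIdeal_lt_asIdeal]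
      exact hQlt
    let c : LTSeries (PrimeSpectrum D) :=
      ((RelSeries.singleton _ p0).snoc p1 (by simpa using h01)).snoc p2 (by simpa using h12)
    have hlen : (c.length : WithBot ℕ∞) ≤ Order.krullDim (PrimeSpectrum D) :=
      Order.LTSeries.length_le_krullDim c
    have hrk : ringKrullDim D = Order.krullDim (PrimeSpectrum D) := rfl
    rw [← hrk, hdim] at hlen
    have hc2 : c.length = 2 := rfl
    rw [hc2] at hlen
    exact absurd hlen (by norm_num)
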